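/- Let n ≥ 1, ρ ≥ 1, σ > 0, and let f ∈ [ρ, σ, W_ρ]. Define g on ℂ₊ⁿ by g(z_1,…,z_n) = f(z_1^{1/ρ},…,z_n^{1/ρ}), where each power is taken with the principal branch. Then g is holomorphic in ℂ₊ⁿ and g ∈ [1, σ·n^{ρ/2}, ℂ₊ⁿ]; in particular, if f ∈ [ρ, ∞, W_ρ) then g ∈ [1, ∞, ℂ₊ⁿ). -/

import Mathlib

open Filter Metric Set

noncomputable section

/-- The cone `W_τ = {z ∈ ℂⁿ : |arg z_j| < π/(2τ), j = 1,…,n}`. -/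
def Wcone (n : ℕ) (τ : ℝ) : Set (EuclideanSpace ℂ (Fin n)) :=
  {z | ∀ j, z j ≠ 0 ∧ |Complex.arg (z j)| < Real.pi / (2 * τ)}

/-- The coordinatewise power map `z_j ↦ z_j^ρ = exp(ρ Log z_j)` (principal branch). -/
def cpowMap (n : ℕ) (ρ : ℝ) (z : EuclideanSpace ℂ (Fin n)) : EuclideanSpace ℂ (Fin n) :=
  WithLp.toLp 2 (fun j => Complex.exp ((ρ : ℂ) * Complex.log (z j)))

/-- The class `[ρ, σ, C]`: `f` is holomorphic in `C` and
`limsup_{|z|→∞, z∈C} log|f(z)|/|z|^ρ ≤ σ` (Euclidean norm). -/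
def MemClass (n : ℕ) (ρ σ : ℝ) (C : Set (EuclideanSpace ℂ (Fin n)))
    (f : EuclideanSpace ℂ (Fin n) → ℂ) : Prop :=
  DifferentiableOn ℂ f C ∧
    ∀ ε > 0, ∃ R : ℝ, ∀ z ∈ C, R ≤ ‖z‖ →
      Real.log ‖f z‖ ≤ (σ + ε) * ‖z‖ ^ ρ

lemma arg_exp_add_mul_I (a b : ℝ) (h1 : -Real.pi < b) (h2 : b ≤ Real.pi) :
    Complex.arg (Complex.exp (↑a + ↑b * Complex.I)) = b := by
  rw [Complex.exp_add, ← Complex.ofReal_exp,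
    Complex.arg_real_mul _ (Real.exp_pos a), Complex.exp_mul_I,
    Complex.arg_cos_add_sin_mul_I ⟨h1, h2⟩]

lemma rlog_decomp (ζ : ℂ) (r : ℝ) :
    (r : ℂ) * Complex.log ζ
      = ↑(r * Real.log ‖ζ‖) + ↑(r * Complex.arg ζ) * Complex.I := by
  rw [Complex.log]; push_cast; ring

/-- abs of the principal power. -/
lemma abs_rpow_branch (ζ : ℂ) (hζ : ζ ≠ 0) (r : ℝ) :
    ‖Complex.exp ((r : ℂ) * Complex.log ζ)‖ = ‖ζ‖ ^ r := by
  rw [rlog_decomp, Complex.norm_exp]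
  have h0 : (0 : ℝ) < ‖ζ‖ := norm_pos_iff.mpr hζ
  rw [Real.rpow_def_of_pos h0]
  congr 1
  simp [mul_comm]

/-- arg of the principal power, when the new argument stays in `(-π, π]`. -/
lemma arg_rpow_branch (ζ : ℂ) (r : ℝ) (h1 : -Real.pi < r * Complex.arg ζ)
    (h2 : r * Complex.arg ζ ≤ Real.pi) :
    Complex.arg (Complex.exp ((r : ℂ) * Complex.log ζ)) = r * Complex.arg ζ := by
  rw [rlog_decomp, arg_exp_add_mul_I _ _ h1 h2]

lemma coord_norm_le {n : ℕ} (x : EuclideanSpace ℂ (Fin n)) (j : Fin n) : ‖x j‖ ≤ ‖x‖ := by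
  rw [EuclideanSpace.norm_eq]
  have : ‖x j‖ = Real.sqrt (‖x j‖ ^ 2) := (Real.sqrt_sq (norm_nonneg _)).symm
  rw [this]
  apply Real.sqrt_le_sqrt
  exact Finset.single_le_sum (f := fun i => ‖x i‖ ^ 2)
    (fun i _ => sq_nonneg _) (Finset.mem_univ j)

lemma exists_coord_norm_ge {n : ℕ} (hn : 1 ≤ n) (x : EuclideanSpace ℂ (Fin n)) :
    ∃ j, ‖x‖ ≤ Real.sqrt n * ‖x j‖ := by
  have hne : (Finset.univ : Finset (Fin n)).Nonempty := by
    simpa [Finset.univ_nonempty_iff] using Fin.pos_iff_nonempty.mp hn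
  obtain ⟨j, -, hj⟩ := Finset.exists_max_image Finset.univ (fun i => ‖x i‖) hne
  refine ⟨j, ?_⟩
  have h1 : ‖x‖ ≤ Real.sqrt (n * ‖x j‖ ^ 2) := by
    rw [EuclideanSpace.norm_eq]
    apply Real.sqrt_le_sqrt
    calc ∑ i, ‖x i‖ ^ 2 ≤ ∑ _i : Fin n, ‖x j‖ ^ 2 := by
          apply Finset.sum_le_sum
          intro i _
          exact pow_le_pow_left₀ (norm_nonneg _) (hj i (Finset.mem_univ i)) 2
      _ = n * ‖x j‖ ^ 2 := by simp [mul_comm]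
  calc ‖x‖ ≤ Real.sqrt (n * ‖x j‖ ^ 2) := h1
    _ = Real.sqrt n * ‖x j‖ := by
        rw [Real.sqrt_mul (by positivity), Real.sqrt_sq (norm_nonneg _)]

/-- Main helper: one direction of the reduction, for any `σ > 0`. -/
lemma reduction_aux (n : ℕ) (hn : 1 ≤ n) (ρ : ℝ) (hρ : 1 ≤ ρ) (σ : ℝ) (hσ : 0 < σ)
    (f : EuclideanSpace ℂ (Fin n) → ℂ) (hf : MemClass n ρ σ (Wcone n ρ) f) :
    MemClass n 1 (σ * (n : ℝ) ^ (ρ / 2)) (Wcone n 1) (fun z => f (cpowMap n ρ⁻¹ z)) := by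
  have hρ0 : (0 : ℝ) < ρ := lt_of_lt_of_le one_pos hρ
  have hrinv : (0 : ℝ) < ρ⁻¹ := inv_pos.mpr hρ0
  have hrinv1 : ρ⁻¹ ≤ 1 := by
    rw [inv_le_one_iff₀]; right; exact hρ
  -- basic facts about points of the cone
  have key : ∀ z ∈ Wcone n 1, ∀ j,
      cpowMap n ρ⁻¹ z j ≠ 0 ∧
      Complex.arg (cpowMap n ρ⁻¹ z j) = ρ⁻¹ * Complex.arg (z j) ∧
      ‖cpowMap n ρ⁻¹ z j‖ = ‖z j‖ ^ (ρ⁻¹ : ℝ) := by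
    intro z hz j
    obtain ⟨hne, harg⟩ := hz j
    rw [mul_one] at harg
    have hargπ2 : |Complex.arg (z j)| < Real.pi / 2 := harg
    have habs : |ρ⁻¹ * Complex.arg (z j)| ≤ Real.pi / 2 := by
      rw [abs_mul, abs_of_pos hrinv]
      calc ρ⁻¹ * |Complex.arg (z j)| ≤ 1 * |Complex.arg (z j)| := by
            apply mul_le_mul_of_nonneg_right hrinv1 (abs_nonneg _)
        _ ≤ Real.pi / 2 := by rw [one_mul]; exact le_of_lt hargπ2
    have hπ : Real.pi / 2 < Real.pi := by linarith [Real.pi_pos]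
    have h1 : -Real.pi < ρ⁻¹ * Complex.arg (z j) := by
      have := (abs_le.mp habs).1; linarith
    have h2 : ρ⁻¹ * Complex.arg (z j) ≤ Real.pi := by
      have := (abs_le.mp habs).2; linarith
    exact ⟨Complex.exp_ne_zero _, arg_rpow_branch _ _ h1 h2, abs_rpow_branch _ hne _⟩
  -- mapping of cones
  have hmaps : MapsTo (cpowMap n ρ⁻¹) (Wcone n 1) (Wcone n ρ) := by
    intro z hz j
    obtain ⟨hne, harg, -⟩ := key z hz j
    refine ⟨hne, ?_⟩
    rw [harg, abs_mul, abs_of_pos hrinv]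
    obtain ⟨-, h⟩ := hz j
    have h' : |Complex.arg (z j)| < Real.pi / 2 := by rwa [mul_one] at h
    calc ρ⁻¹ * |Complex.arg (z j)| < ρ⁻¹ * (Real.pi / 2) :=
          (mul_lt_mul_iff_right₀ hrinv).mpr h'
      _ = Real.pi / (2 * ρ) := by rw [inv_mul_eq_div, div_div]
  -- differentiability of the power map
  have hdiff : ∀ z ∈ Wcone n 1, DifferentiableAt ℂ (cpowMap n ρ⁻¹) z := by
    intro z hz
    have : cpowMap n ρ⁻¹ = ⇑(PiLp.continuousLinearEquiv 2 ℂ (fun _ : Fin n => ℂ)).symm ∘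
        (fun z (j : Fin n) => Complex.exp (((ρ⁻¹ : ℝ) : ℂ) * Complex.log (z j))) := rfl
    rw [this]
    apply ((PiLp.continuousLinearEquiv 2 ℂ (fun _ : Fin n => ℂ)).symm.differentiableAt).comp
    rw [differentiableAt_pi]
    intro j
    obtain ⟨hne, harg⟩ := hz j
    have hre : 0 < (z j).re := by
      have h' : |Complex.arg (z j)| < Real.pi / 2 := by rwa [mul_one] at harg
      rcases Complex.abs_arg_lt_pi_div_two_iff.mp h' with h | h
      · exact h
      · exact absurd h hne
    have hslit : z j ∈ Complex.slitPlane := Complex.mem_slitPlane_iff.mpr (Or.inl hre)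
    apply DifferentiableAt.cexp
    apply DifferentiableAt.const_mul
    exact (Complex.differentiableAt_log hslit).comp z
      (EuclideanSpace.proj j : EuclideanSpace ℂ (Fin n) →L[ℂ] ℂ).differentiableAt
  constructor
  · -- differentiability of the composition
    exact hf.1.comp (fun z hz => (hdiff z hz).differentiableWithinAt) hmaps
  · -- growth estimate
    intro ε hε
    have hnpos : (0 : ℝ) < (n : ℝ) := by exact_mod_cast hn
    have hn1 : (1 : ℝ) ≤ (n : ℝ) := by exact_mod_cast hn
    have hpow1 : (1 : ℝ) ≤ (n : ℝ) ^ (ρ / 2) := Real.one_le_rpow hn1 (by positivity)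
    have hpowpos : (0 : ℝ) < (n : ℝ) ^ (ρ / 2) := lt_of_lt_of_le one_pos hpow1
    set ε₀ := ε / (n : ℝ) ^ (ρ / 2) with hε₀def
    have hε₀ : 0 < ε₀ := div_pos hε hpowpos
    obtain ⟨R, hR⟩ := hf.2 ε₀ hε₀
    refine ⟨Real.sqrt n * (max R 1) ^ (ρ : ℝ), fun z hz hzR => ?_⟩
    set w : EuclideanSpace ℂ (Fin n) := cpowMap n ρ⁻¹ z with hw
    -- lower bound on ‖w‖
    obtain ⟨j₀, hj₀⟩ := exists_coord_norm_ge hn z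
    have hsqrtpos : (0 : ℝ) < Real.sqrt n := Real.sqrt_pos.mpr hnpos
    have hzj₀ : (max R 1) ^ (ρ : ℝ) ≤ ‖z j₀‖ := by
      have : Real.sqrt n * (max R 1) ^ (ρ : ℝ) ≤ Real.sqrt n * ‖z j₀‖ :=
        le_trans hzR hj₀
      exact le_of_mul_le_mul_left this hsqrtpos
    have hwnorm_lb : R ≤ ‖w‖ := by
      have h1 : ‖w j₀‖ = ‖z j₀‖ ^ (ρ⁻¹ : ℝ) := by
        exact (key z hz j₀).2.2
      have h2 : ((max R 1) ^ (ρ : ℝ)) ^ (ρ⁻¹ : ℝ) ≤ ‖z j₀‖ ^ (ρ⁻¹ : ℝ) :=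
        Real.rpow_le_rpow (by positivity) hzj₀ (le_of_lt hrinv)
      have h3 : ((max R 1) ^ (ρ : ℝ)) ^ (ρ⁻¹ : ℝ) = max R 1 := by
        rw [← Real.rpow_mul (le_trans zero_le_one (le_max_right R 1)),
          mul_inv_cancel₀ (ne_of_gt hρ0), Real.rpow_one]
      calc R ≤ max R 1 := le_max_left R 1
        _ = ((max R 1) ^ (ρ : ℝ)) ^ (ρ⁻¹ : ℝ) := h3.symm
        _ ≤ ‖z j₀‖ ^ (ρ⁻¹ : ℝ) := h2
        _ = ‖w j₀‖ := h1.symm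
        _ ≤ ‖w‖ := coord_norm_le w j₀
    -- upper bound on ‖w‖
    have hzn1 : (1 : ℝ) ≤ ‖z‖ := by
      calc (1 : ℝ) ≤ Real.sqrt n * (max R 1) ^ (ρ : ℝ) := by
            have h1 : (1 : ℝ) ≤ Real.sqrt n := by
              rw [show (1:ℝ) = Real.sqrt 1 by simp]
              exact Real.sqrt_le_sqrt hn1
            have h2 : (1 : ℝ) ≤ (max R 1) ^ (ρ : ℝ) :=
              Real.one_le_rpow (le_max_right R 1) (le_of_lt hρ0)
            nlinarith
        _ ≤ ‖z‖ := hzR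
    have hwnorm_ub : ‖w‖ ^ (ρ : ℝ) ≤ (n : ℝ) ^ (ρ / 2) * ‖z‖ := by
      have hcoord : ∀ j, ‖w j‖ ≤ ‖z‖ ^ (ρ⁻¹ : ℝ) := by
        intro j
        have h1 : ‖w j‖ = ‖z j‖ ^ (ρ⁻¹ : ℝ) := by
          exact (key z hz j).2.2
        rw [h1]
        exact Real.rpow_le_rpow (norm_nonneg _) (coord_norm_le z j) (le_of_lt hrinv)
      have hwle : ‖w‖ ≤ Real.sqrt n * ‖z‖ ^ (ρ⁻¹ : ℝ) := by
        rw [EuclideanSpace.norm_eq]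
        calc Real.sqrt (∑ j, ‖w j‖ ^ 2)
            ≤ Real.sqrt (∑ _j : Fin n, (‖z‖ ^ (ρ⁻¹ : ℝ)) ^ 2) := by
              apply Real.sqrt_le_sqrt
              apply Finset.sum_le_sum
              intro j _
              exact pow_le_pow_left₀ (norm_nonneg _) (hcoord j) 2
          _ = Real.sqrt ((n : ℝ) * (‖z‖ ^ (ρ⁻¹ : ℝ)) ^ 2) := by simp [mul_comm]
          _ = Real.sqrt n * ‖z‖ ^ (ρ⁻¹ : ℝ) := by
              rw [Real.sqrt_mul (by positivity), Real.sqrt_sq (by positivity)]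
      calc ‖w‖ ^ (ρ : ℝ) ≤ (Real.sqrt n * ‖z‖ ^ (ρ⁻¹ : ℝ)) ^ (ρ : ℝ) :=
            Real.rpow_le_rpow (norm_nonneg _) hwle (le_of_lt hρ0)
        _ = (Real.sqrt n) ^ (ρ : ℝ) * (‖z‖ ^ (ρ⁻¹ : ℝ)) ^ (ρ : ℝ) :=
            Real.mul_rpow (by positivity) (by positivity)
        _ = (n : ℝ) ^ (ρ / 2) * ‖z‖ := by
            rw [Real.sqrt_eq_rpow, ← Real.rpow_mul (le_of_lt hnpos),
              ← Real.rpow_mul (norm_nonneg z), inv_mul_cancel₀ (ne_of_gt hρ0),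
              Real.rpow_one, one_div, inv_mul_eq_div]
    -- conclude
    have hfw := hR w (hmaps hz) hwnorm_lb
    have hσε₀ : (0 : ℝ) ≤ σ + ε₀ := by positivity
    calc Real.log ‖f w‖
        ≤ (σ + ε₀) * ‖w‖ ^ (ρ : ℝ) := hfw
      _ ≤ (σ + ε₀) * ((n : ℝ) ^ (ρ / 2) * ‖z‖) :=
          mul_le_mul_of_nonneg_left hwnorm_ub hσε₀
      _ = (σ * (n : ℝ) ^ (ρ / 2) + ε) * ‖z‖ := by
          rw [hε₀def]
          field_simp
      _ = (σ * (n : ℝ) ^ (ρ / 2) + ε) * ‖z‖ ^ (1 : ℝ) := by rw [Real.rpow_one]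

/-- **Reduction from order `ρ` in `W_ρ` to order `1` in `ℂ₊ⁿ`.** If `f ∈ [ρ,σ,W_ρ]`
with `ρ ≥ 1`, `σ > 0`, then `g(z) = f(z_1^{1/ρ},…,z_n^{1/ρ})` (principal branches)
is holomorphic in `ℂ₊ⁿ = W_1` and belongs to `[1, σ·n^{ρ/2}, ℂ₊ⁿ]`; in particular,
every `f' ∈ [ρ,∞,W_ρ)` gives `g' ∈ [1,∞,ℂ₊ⁿ)`. -/
theorem order_reduction (n : ℕ) (hn : 1 ≤ n) (ρ : ℝ) (hρ : 1 ≤ ρ) (σ : ℝ) (hσ : 0 < σ)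
    (f : EuclideanSpace ℂ (Fin n) → ℂ) (hf : MemClass n ρ σ (Wcone n ρ) f) :
    MemClass n 1 (σ * (n : ℝ) ^ (ρ / 2)) (Wcone n 1) (fun z => f (cpowMap n ρ⁻¹ z)) ∧
    (∀ f' : EuclideanSpace ℂ (Fin n) → ℂ,
      (∃ σ' > (0:ℝ), MemClass n ρ σ' (Wcone n ρ) f') →
      ∃ σ'' > (0:ℝ), MemClass n 1 σ'' (Wcone n 1) (fun z => f' (cpowMap n ρ⁻¹ z))) := by
  refine ⟨reduction_aux n hn ρ hρ σ hσ f hf, ?_⟩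
  rintro f' ⟨σ', hσ', hf'⟩
  have hnpos : (0 : ℝ) < (n : ℝ) := by exact_mod_cast hn
  exact ⟨σ' * (n : ℝ) ^ (ρ / 2), by positivity,
    reduction_aux n hn ρ hρ σ' hσ' f' hf'⟩
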